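/- The two parameterizations ρ = (1/2, 1/2), A = [[1/2, 0, 1/2], [1, 1/2, 1/2]] and ρ̃ = (1/4, 3/4), Ã = [[0, 0, 1/2], [1, 1/3, 1/2]] of the hub model with null component (n_L = 1 hub node, n = 3 nodes, row 0 being the null component) induce the same probability distribution on {0,1}³. -/
import Mathlib

open Finset

/-- The two parameterizations ρ = (1/2,1/2), A = [[1/2,0,1/2],[1,1/2,1/2]] and
ρ̃ = (1/4,3/4), Ã = [[0,0,1/2],[1,1/3,1/2]] of the hub model with null component
(row 0 is the null component) induce the same distribution on {0,1}³. -/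
theorem stmt_5 :
    ∀ g : Fin 3 → Bool,
      (∑ i : Fin 2, (![(1:ℝ)/2, 1/2]) i *
          ∏ j : Fin 3, (if g j then (!![(1:ℝ)/2, 0, 1/2; 1, 1/2, 1/2]) i j
            else 1 - (!![(1:ℝ)/2, 0, 1/2; 1, 1/2, 1/2]) i j)) =
      (∑ i : Fin 2, (![(1:ℝ)/4, 3/4]) i *
          ∏ j : Fin 3, (if g j then (!![(0:ℝ), 0, 1/2; 1, 1/3, 1/2]) i j
            else 1 - (!![(0:ℝ), 0, 1/2; 1, 1/3, 1/2]) i j)) := by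
  intro g
  cases hg0 : g 0 <;> cases hg1 : g 1 <;> cases hg2 : g 2 <;>
    simp [Fin.sum_univ_succ, Fin.prod_univ_succ, hg0, hg1, hg2,
      Matrix.cons_val_zero, Matrix.cons_val_one] <;> norm_num
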